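/- Let a > 1 be an irrational real number, let n ≥ 2, and let C_n ⊆ R^n be the cone generated by the Sym(n)-orbit of the vector (1, a, 0, …, 0). Then the monoid M_n = C_n ∩ Z^n is not finitely generated. -/

import Mathlib

/-- Membership in the cone in `ℝⁿ` generated by `B`. -/
def inConeF {n : ℕ} (B : Set (Fin n → ℝ)) (u : Fin n → ℝ) : Prop :=
  ∃ (k : ℕ) (c : Fin k → ℝ) (b : Fin k → Fin n → ℝ),
    (∀ i, 0 ≤ c i) ∧ (∀ i, b i ∈ B) ∧ u = ∑ i, c i • b i

/-- Membership in the monoid in `ℤⁿ` generated by `B`: nonnegative integer combinations. -/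
def inMndF {n : ℕ} (B : Set (Fin n → ℤ)) (u : Fin n → ℤ) : Prop :=
  ∃ (k : ℕ) (c : Fin k → ℕ) (b : Fin k → Fin n → ℤ),
    (∀ i, b i ∈ B) ∧ u = ∑ i, (c i : ℤ) • b i

/-- For irrational `a > 1` and `n ≥ 2`, the monoid of lattice points of the cone generated
by the `Sym(n)`-orbit of `(1, a, 0, …, 0)` is not finitely generated. -/
theorem gordan_fails_for_irrational_cone (a : ℝ) (ha : 1 < a) (hirr : Irrational a)
    (n : ℕ) (hn : 2 ≤ n)
    (g : Fin n → ℝ)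
    (hg : ∀ i : Fin n, g i = if (i : ℕ) = 0 then 1 else if (i : ℕ) = 1 then a else 0) :
    ¬ ∃ S : Finset (Fin n → ℤ), ∀ u : Fin n → ℤ,
        inConeF {v | ∃ σ : Equiv.Perm (Fin n), v = fun i => g (σ.symm i)}
            (fun i => (u i : ℝ)) ↔
          inMndF (↑S) u := by
  rintro ⟨S, hS⟩
  set B : Set (Fin n → ℝ) := {v | ∃ σ : Equiv.Perm (Fin n), v = fun i => g (σ.symm i)} with hB
  have h0n : 0 < n := by omega
  have h1n : 1 < n := by omega
  set o : Fin n := ⟨0, h0n⟩ with ho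
  set e : Fin n := ⟨1, h1n⟩ with he
  have hoe : o ≠ e := by simp [ho, he, Fin.ext_iff]
  have ha0 : (0:ℝ) < a := lt_trans one_pos ha
  -- values of g
  have hgif : ∀ j : Fin n, g j = if j = o then 1 else if j = e then a else 0 := by
    intro j
    rw [hg j]
    have h1 : j = o ↔ (j:ℕ) = 0 := by simp [ho, Fin.ext_iff]
    have h2 : j = e ↔ (j:ℕ) = 1 := by simp [he, Fin.ext_iff]
    simp only [h1, h2]
  have hgo : g o = 1 := by rw [hgif]; simp
  have hge : g e = a := by rw [hgif]; simp [Ne.symm hoe]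
  have hgnn : ∀ j, 0 ≤ g j := by
    intro j; rw [hgif]; split_ifs <;> linarith
  have hgle : ∀ j, g j ≤ a := by
    intro j; rw [hgif]; split_ifs <;> linarith
  -- sum of a double indicator
  have hsum_if : ∀ x y : ℝ, (∑ j : Fin n, if j = o then x else if j = e then y else 0) = x + y := by
    intro x y
    have key : ∀ j : Fin n, (if j = o then x else if j = e then y else 0)
        = (if j = o then x else 0) + (if j = e then y else 0) := by
      intro j
      by_cases h1 : j = o
      · subst h1; simp [hoe]
      · by_cases h2 : j = e
        · subst h2; simp [h1]
        · simp [h1, h2]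
    rw [Finset.sum_congr rfl fun j _ => key j, Finset.sum_add_distrib,
      Finset.sum_ite_eq' Finset.univ o, Finset.sum_ite_eq' Finset.univ e]
    simp
  have hgsum : ∑ j, g j = 1 + a := by
    rw [Finset.sum_congr rfl fun j _ => hgif j]; exact hsum_if 1 a
  -- orbit element properties
  have hBnn : ∀ b ∈ B, ∀ i, 0 ≤ b i := by rintro b ⟨σ, rfl⟩ i; exact hgnn _
  have hBle : ∀ b ∈ B, b e ≤ a := by rintro b ⟨σ, rfl⟩; exact hgle _
  have hBsum : ∀ b ∈ B, ∑ j, b j = 1 + a := by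
    rintro b ⟨σ, rfl⟩; rw [Equiv.sum_comp σ.symm g]; exact hgsum
  -- the linear functional
  set L : (Fin n → ℝ) → ℝ := fun v => a * (∑ j, v j) - (a + 1) * v e with hL
  have hLsum : ∀ (k : ℕ) (c : Fin k → ℝ) (b : Fin k → Fin n → ℝ),
      L (∑ i, c i • b i) = ∑ i, c i * L (b i) := by
    intro k c b
    simp only [hL, Finset.sum_apply, Pi.smul_apply, smul_eq_mul]
    rw [Finset.sum_comm, Finset.mul_sum, Finset.mul_sum, ← Finset.sum_sub_distrib]
    refine Finset.sum_congr rfl fun i _ => ?_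
    rw [← Finset.mul_sum]
    ring
  have hcone : ∀ u : Fin n → ℝ, inConeF B u → (∀ i, 0 ≤ u i) ∧ 0 ≤ L u := by
    rintro u ⟨k, c, b, hcnn, hbB, rfl⟩
    constructor
    · intro j
      simp only [Finset.sum_apply, Pi.smul_apply, smul_eq_mul]
      exact Finset.sum_nonneg fun i _ => mul_nonneg (hcnn i) (hBnn _ (hbB i) j)
    · rw [hLsum]
      refine Finset.sum_nonneg fun i _ => mul_nonneg (hcnn i) ?_
      have h1 := hBle _ (hbB i)
      have h2 := hBsum _ (hbB i)
      simp only [hL]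
      rw [h2]
      nlinarith
  -- each generator in S is in the cone
  have hScone : ∀ s ∈ S, inConeF B (fun i => (s i : ℝ)) := by
    intro s hs
    refine (hS s).mpr ⟨1, fun _ => 1, fun _ => s, fun _ => hs, ?_⟩
    simp
  -- irrationality: a * K ≠ M for nonzero integer K
  have hirrKM : ∀ K M : ℤ, K ≠ 0 → a * (K:ℝ) ≠ (M:ℝ) := by
    intro K M hK h
    refine hirr ⟨(M:ℚ)/(K:ℚ), ?_⟩
    have hK' : (K:ℝ) ≠ 0 := Int.cast_ne_zero.mpr hK
    push_cast
    rw [div_eq_iff hK']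
    linarith [h]
  -- strict positivity of L on nonzero lattice cone points
  have hpos : ∀ u : Fin n → ℤ, inConeF B (fun i => (u i:ℝ)) → u ≠ 0 →
      0 < L (fun i => (u i:ℝ)) := by
    intro u hu hne
    obtain ⟨hnn, hLnn⟩ := hcone _ hu
    rcases hLnn.lt_or_eq with h | h
    · exact h
    · exfalso
      set K : ℤ := (∑ j, u j) - u e with hK
      have hKM : a * (K:ℝ) = ((u e : ℤ):ℝ) := by
        simp only [hL] at h
        push_cast [hK]
        rw [mul_sub]
        linarith [h]
      by_cases hK0 : K = 0
      · have hMe : (u e : ℝ) = 0 := by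
          rw [hK0] at hKM
          push_cast at hKM
          linarith
        have hMe' : u e = 0 := by exact_mod_cast hMe
        have hsum0 : ∑ j, u j = 0 := by omega
        have hall := (Finset.sum_eq_zero_iff_of_nonneg
          (fun j _ => by exact_mod_cast hnn j : ∀ j ∈ Finset.univ, 0 ≤ u j)).mp hsum0
        exact hne (funext fun j => hall j (Finset.mem_univ j))
      · exact hirrKM K (u e) hK0 hKM
  -- membership of "staircase" lattice points in the cone
  have hmem : ∀ K M : ℤ, 1 ≤ K → K ≤ M → (M:ℝ) ≤ a * K →
      inConeF B (fun i => ((if i = o then K else if i = e then M else 0 : ℤ) : ℝ)) := by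
    intro K M hK1 hKM hMa
    have ha2 : (0:ℝ) < a^2 - 1 := by nlinarith
    have hK1' : (1:ℝ) ≤ (K:ℝ) := by exact_mod_cast hK1
    have hKM' : (K:ℝ) ≤ (M:ℝ) := by exact_mod_cast hKM
    refine ⟨2, ![(a*M - K)/(a^2-1), (a*K - M)/(a^2-1)],
      ![g, fun i => g (Equiv.swap o e i)], ?_, ?_, ?_⟩
    · intro i
      fin_cases i
      · exact div_nonneg (by nlinarith) (le_of_lt ha2)
      · exact div_nonneg (by nlinarith) (le_of_lt ha2)
    · intro i
      fin_cases i
      · exact ⟨Equiv.refl _, rfl⟩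
      · exact ⟨Equiv.swap o e, by simp [Equiv.symm_swap]⟩
    · funext i
      simp only [Fin.sum_univ_two, Matrix.cons_val_zero, Matrix.cons_val_one, Matrix.head_cons,
        Pi.add_apply, Pi.smul_apply, smul_eq_mul]
      by_cases h1 : i = o
      · subst h1
        rw [Equiv.swap_apply_left, hgo, hge]
        simp only [if_pos rfl]
        field_simp
        simp only [if_pos trivial]
        ring
      · by_cases h2 : i = e
        · subst h2
          rw [Equiv.swap_apply_right, hgo, hge]
          simp only [if_neg (Ne.symm hoe), if_pos rfl]
          field_simp
          simp only [if_pos trivial]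
          ring
        · rw [Equiv.swap_apply_of_ne_of_ne h1 h2]
          have : g i = 0 := by rw [hgif]; simp [h1, h2]
          simp [h1, h2, this]
  -- choose ε
  obtain ⟨ε, hε0, hε1, hεS⟩ : ∃ ε : ℝ, 0 < ε ∧ ε < 1 ∧
      ∀ s ∈ S, s ≠ 0 → ε ≤ L (fun i => (s i : ℝ)) := by
    set T := S.filter (fun s => s ≠ 0) with hT
    rcases T.eq_empty_or_nonempty with hTe | hTne
    · refine ⟨1/2, by norm_num, by norm_num, fun s hs hs0 => ?_⟩
      rw [Finset.eq_empty_iff_forall_notMem] at hTe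
      exact absurd (Finset.mem_filter.mpr ⟨hs, hs0⟩) (hTe s)
    · have hTpos : ∀ s ∈ T, 0 < L (fun i => (s i : ℝ)) := by
        intro s hsT
        obtain ⟨hsS, hs0⟩ := Finset.mem_filter.mp hsT
        exact hpos s (hScone s hsS) hs0
      set ε0 := T.inf' hTne (fun s => L (fun i => (s i : ℝ))) with hε0def
      have hε0pos : 0 < ε0 := by
        rw [hε0def, Finset.lt_inf'_iff]
        exact hTpos
      refine ⟨min ε0 (1/2), lt_min hε0pos (by norm_num),
        lt_of_le_of_lt (min_le_right _ _) (by norm_num), ?_⟩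
      intro s hs hs0
      exact le_trans (min_le_left _ _)
        (Finset.inf'_le _ (Finset.mem_filter.mpr ⟨hs, hs0⟩))
  -- Dirichlet: find K M with 0 < a K - M < ε
  obtain ⟨K, M, hK1, hKM, hdpos, hdlt⟩ : ∃ K M : ℤ, 1 ≤ K ∧ K ≤ M ∧
      0 < a * K - M ∧ a * K - M < ε := by
    -- first, small nonzero |k a - j|
    obtain ⟨N, hN1, hNε⟩ : ∃ N : ℕ, 0 < N ∧ 1/((N:ℝ)+1) < ε := by
      obtain ⟨N, hN⟩ := exists_nat_gt (1/ε)
      refine ⟨N+1, Nat.succ_pos _, ?_⟩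
      have h1 : 1 < (N:ℝ) * ε := (div_lt_iff₀ hε0).mp hN
      push_cast
      rw [div_lt_iff₀ (by positivity)]
      nlinarith
    obtain ⟨j, k, hk0, hkN, hjk⟩ := Real.exists_int_int_abs_mul_sub_le a hN1
    have hd : |(k:ℝ) * a - j| < ε := lt_of_le_of_lt hjk hNε
    have hdne : (k:ℝ) * a - j ≠ 0 := by
      intro h
      exact hirrKM k j (ne_of_gt hk0) (by rw [mul_comm]; linarith [h])
    -- get K', M' with 0 < a K' - M' < ε
    obtain ⟨K', M', hK'1, hd'⟩ : ∃ K' M' : ℤ, 1 ≤ K' ∧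
        0 < a * K' - M' ∧ a * K' - M' < ε := by
      rcases lt_or_gt_of_ne hdne with hneg | hposd
      · -- y = j - k a ∈ (0, ε)
        set y : ℝ := (j:ℝ) - k * a with hy
        have hy0 : 0 < y := by rw [hy]; linarith
        have hyε : y < ε := by
          have := abs_lt.mp hd
          rw [hy]; linarith [this.1]
        have hy1 : y < 1 := lt_trans hyε hε1
        have h1y : (1:ℝ) < 1/y := by rw [lt_div_iff₀ hy0]; linarith
        set t : ℤ := ⌈1/y⌉ - 1 with ht
        have ht1 : 1 ≤ t := by
          have : (1:ℤ) < ⌈1/y⌉ := Int.lt_ceil.mpr (by exact_mod_cast h1y)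
          omega
        have htlt : (t:ℝ) < 1/y := by
          rw [ht]
          push_cast
          linarith [Int.ceil_lt_add_one (1/y)]
        have htge : 1/y - 1 ≤ (t:ℝ) := by
          rw [ht]
          push_cast
          linarith [Int.le_ceil (1/y)]
        have hty1 : (t:ℝ) * y < 1 := by
          rw [← lt_div_iff₀ hy0] at *
          exact htlt
        have hty2 : 1 - y ≤ (t:ℝ) * y := by
          have := mul_le_mul_of_nonneg_right htge (le_of_lt hy0)
          calc 1 - y = (1/y - 1) * y := by field_simp
            _ ≤ (t:ℝ) * y := this
        refine ⟨t * k, t * j - 1, ?_, ?_, ?_⟩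
        · nlinarith
        · have : a * ((t:ℝ) * k) - ((t:ℝ) * j - 1) = 1 - t * y := by rw [hy]; ring
          push_cast
          rw [this]
          linarith
        · have : a * ((t:ℝ) * k) - ((t:ℝ) * j - 1) = 1 - t * y := by rw [hy]; ring
          push_cast
          rw [this]
          linarith
      · refine ⟨k, j, hk0, ?_, ?_⟩
        · linarith [hposd]
        · have := abs_lt.mp hd
          linarith [this.2]
    -- upgrade: monotone M
    refine ⟨K', ⌊a * K'⌋, hK'1, ?_, ?_, ?_⟩
    · rw [Int.le_floor]
      have : (1:ℝ) ≤ (K':ℝ) := by exact_mod_cast hK'1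
      nlinarith
    · have hle := Int.floor_le (a * (K':ℝ))
      have hneq : a * (K':ℝ) ≠ ((⌊a * (K':ℝ)⌋ : ℤ):ℝ) := hirrKM K' _ (by omega)
      push_cast at *
      cases' lt_or_eq_of_le hle with h h
      · linarith
      · exact absurd h.symm hneq
    · have hMle : M' ≤ ⌊a * (K':ℝ)⌋ := by
        rw [Int.le_floor]
        linarith [hd'.1]
      have : ((M':ℤ):ℝ) ≤ ((⌊a * (K':ℝ)⌋:ℤ):ℝ) := by exact_mod_cast hMle
      push_cast at *
      linarith [hd'.2]
  -- the contradiction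
  set u : Fin n → ℤ := fun i => if i = o then K else if i = e then M else 0 with hu
  have hucone : inConeF B (fun i => (u i : ℝ)) := hmem K M hK1 hKM (by linarith)
  obtain ⟨κ, c, s, hsS, hsum⟩ := (hS u).mp hucone
  have hucast : ∀ i, ((u i : ℤ):ℝ) = if i = o then (K:ℝ) else if i = e then (M:ℝ) else 0 := by
    intro i
    rw [hu]
    simp only [apply_ite (fun z : ℤ => (z : ℝ)), Int.cast_zero]
  have hLu : L (fun i => (u i : ℝ)) = a * K - M := by
    simp only [hL]
    have h1 : (∑ j, ((u j : ℤ):ℝ)) = (K:ℝ) + M := by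
      rw [Finset.sum_congr rfl fun j _ => hucast j]
      exact hsum_if _ _
    have h2 : ((u e : ℤ):ℝ) = (M:ℝ) := by
      rw [hucast]; simp [Ne.symm hoe]
    rw [h1, h2]
    ring
  have hLdecomp : L (fun i => (u i : ℝ)) = ∑ i, (c i : ℝ) * L (fun j => (s i j : ℝ)) := by
    have hcast : (fun i => (u i : ℝ)) = ∑ i, (c i : ℝ) • (fun j => (s i j : ℝ)) := by
      funext j
      rw [hsum]
      simp only [Finset.sum_apply, Pi.smul_apply, smul_eq_mul]
      push_cast
      rfl
    rw [hcast, hLsum]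
  by_cases hzero : ∀ i, c i = 0 ∨ s i = 0
  · have huo : u o = 0 := by
      rw [hsum]
      simp only [Finset.sum_apply, Pi.smul_apply, smul_eq_mul]
      refine Finset.sum_eq_zero fun i _ => ?_
      rcases hzero i with h | h
      · simp [h]
      · simp [h]
    have hKu : u o = K := by rw [hu]; simp
    omega
  · push_neg at hzero
    obtain ⟨i0, hc0, hs0⟩ := hzero
    have h1 : (1:ℝ) ≤ (c i0 : ℝ) := by exact_mod_cast Nat.one_le_iff_ne_zero.mpr hc0
    have hLs : ε ≤ L (fun j => (s i0 j : ℝ)) := hεS (s i0) (hsS i0) hs0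
    have hterms : ∀ i ∈ Finset.univ, (0:ℝ) ≤ (c i : ℝ) * L (fun j => (s i j : ℝ)) := by
      intro i _
      exact mul_nonneg (Nat.cast_nonneg _) (hcone _ (hScone _ (hsS i))).2
    have hsingle := Finset.single_le_sum hterms (Finset.mem_univ i0)
    rw [← hLdecomp, hLu] at hsingle
    nlinarith
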